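/- Let α ∈ (ρ_c^0, 1) with α ≠ 1 − ρ_c^0 and β ∈ (1 − ρ_c^1, 1) with β ≠ ρ_c^1 (the transitional/canard parameter regions). Then for every δ > 0 there exists ε_0 > 0 such that for every ε ∈ (0, ε_0) and every twice continuously differentiable ρ : [0,1] → ℝ solving the stationary boundary value problem, the boundary densities satisfy |ρ(0) − (1 − k(ξ*)/(4 α k(0)))| < δ and |ρ(1) − k(ξ*)/(4 β k(1))| < δ. -/

import Mathlib

open Set

/-- The total flux `j(x) = -ε ρ'(x) + ρ(x)(1-ρ(x))` of a density profile `ρ` on `[0,1]`. -/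
noncomputable def flux (ε : ℝ) (ρ : ℝ → ℝ) (x : ℝ) : ℝ :=
  -ε * derivWithin ρ (Icc (0:ℝ) 1) x + ρ x * (1 - ρ x)

/-- `ρ` is a (twice continuously differentiable) solution of the stationary boundary value
problem: `(k j)' = 0` on `[0,1]`, `j(0) = α(1-ρ(0))`, `j(1) = β ρ(1)`. -/
def IsStatSol (k : ℝ → ℝ) (ε α β : ℝ) (ρ : ℝ → ℝ) : Prop :=
  ContDiffOn ℝ 2 ρ (Icc (0:ℝ) 1) ∧
  (∀ x ∈ Icc (0:ℝ) 1, derivWithin (fun y => k y * flux ε ρ y) (Icc (0:ℝ) 1) x = 0) ∧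
  flux ε ρ 0 = α * (1 - ρ 0) ∧
  flux ε ρ 1 = β * ρ 1

/-- `ρ_c^0 = (1/2)(1 - √(1 - k(ξ*)/k(0)))`. -/
noncomputable def rhoC0 (k : ℝ → ℝ) (ξs : ℝ) : ℝ :=
  1/2 * (1 - Real.sqrt (1 - k ξs / k 0))

/-- `ρ_c^1 = (1/2)(1 + √(1 - k(ξ*)/k(1)))`. -/
noncomputable def rhoC1 (k : ℝ → ℝ) (ξs : ℝ) : ℝ :=
  1/2 * (1 + Real.sqrt (1 - k ξs / k 1))

open Set Filter Topology

private lemma uD : UniqueDiffOn ℝ (Icc (0:ℝ) 1) := uniqueDiffOn_Icc one_pos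

private lemma neBot_right {x b : ℝ} (h : x < b) : (𝓝[Ioo x b] x).NeBot := by
  rw [← mem_closure_iff_nhdsWithin_neBot, closure_Ioo h.ne]
  exact ⟨le_refl x, h.le⟩

private lemma neBot_left {a x : ℝ} (h : a < x) : (𝓝[Ioo a x] x).NeBot := by
  rw [← mem_closure_iff_nhdsWithin_neBot, closure_Ioo h.ne]
  exact ⟨h.le, le_refl x⟩

private lemma slope_right {f : ℝ → ℝ} {x b : ℝ}
    (hd : DifferentiableWithinAt ℝ f (Icc 0 1) x)
    (hx0 : 0 ≤ x) (hpos : 0 < derivWithin f (Icc 0 1) x) (hxb : x < b) (hb1 : b ≤ 1) :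
    ∃ y, y ∈ Ioo x b ∧ f x < f y := by
  have hslope := hasDerivWithinAt_iff_tendsto_slope.mp hd.hasDerivWithinAt
  have hev : ∀ᶠ y in 𝓝[Icc (0:ℝ) 1 \ {x}] x, 0 < slope f x y :=
    hslope.eventually (eventually_gt_nhds hpos)
  have hsub : Ioo x b ⊆ Icc (0:ℝ) 1 \ {x} := fun y hy =>
    ⟨⟨hx0.trans hy.1.le, hy.2.le.trans hb1⟩, ne_of_gt hy.1⟩
  haveI := neBot_right hxb
  obtain ⟨y, hy, hs⟩ := ((eventually_mem_nhdsWithin).and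
    (hev.filter_mono (nhdsWithin_mono x hsub))).exists
  refine ⟨y, hy, ?_⟩
  rw [slope_def_field] at hs
  have hyx : 0 < y - x := by linarith [hy.1]
  have := (div_pos_iff.1 hs).resolve_right (fun h => absurd hyx (not_lt.mpr h.2.le))
  linarith [this.1]

private lemma slope_left {f : ℝ → ℝ} {a x : ℝ}
    (hd : DifferentiableWithinAt ℝ f (Icc 0 1) x)
    (ha0 : 0 ≤ a) (hpos : 0 < derivWithin f (Icc 0 1) x) (hax : a < x) (hx1 : x ≤ 1) :
    ∃ y, y ∈ Ioo a x ∧ f y < f x := by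
  have hslope := hasDerivWithinAt_iff_tendsto_slope.mp hd.hasDerivWithinAt
  have hev : ∀ᶠ y in 𝓝[Icc (0:ℝ) 1 \ {x}] x, 0 < slope f x y :=
    hslope.eventually (eventually_gt_nhds hpos)
  have hsub : Ioo a x ⊆ Icc (0:ℝ) 1 \ {x} := fun y hy =>
    ⟨⟨ha0.trans hy.1.le, (hy.2.le.trans hx1)⟩, ne_of_lt hy.2⟩
  haveI := neBot_left hax
  obtain ⟨y, hy, hs⟩ := ((eventually_mem_nhdsWithin).and
    (hev.filter_mono (nhdsWithin_mono x hsub))).exists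
  refine ⟨y, hy, ?_⟩
  rw [slope_def_field] at hs
  have hyx : y - x < 0 := by linarith [hy.2]
  have := (div_pos_iff.1 hs).resolve_left (fun h => absurd hyx (not_lt.mpr h.2.le))
  linarith [this.1]

/-- Forward lower barrier: if `f a ≥ c` and at every contact point `f = c` the derivative is
positive, then `f ≥ c` on `[a,b]`. -/
private lemma barrier_FL {f : ℝ → ℝ} {a b c : ℝ}
    (hc : ContinuousOn f (Icc 0 1))
    (hd : ∀ x ∈ Icc (0:ℝ) 1, DifferentiableWithinAt ℝ f (Icc 0 1) x)
    (ha : 0 ≤ a) (hb : b ≤ 1) (h0 : c ≤ f a)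
    (hcontact : ∀ x, a ≤ x → x ≤ b → f x = c → 0 < derivWithin f (Icc 0 1) x) :
    ∀ x, a ≤ x → x ≤ b → c ≤ f x := by
  by_contra h
  push_neg at h
  obtain ⟨z, haz, hzb, hz⟩ := h
  have hzIcc : z ∈ Icc (0:ℝ) 1 := ⟨ha.trans haz, hzb.trans hb⟩
  have hsub : Icc a z ⊆ Icc (0:ℝ) 1 := fun y hy => ⟨ha.trans hy.1, hy.2.trans hzIcc.2⟩
  set T := {x | x ∈ Icc a z ∧ c ≤ f x} with hT
  have hTsub : T ⊆ Icc a z := fun x hx => hx.1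
  have haT : a ∈ T := ⟨left_mem_Icc.mpr haz, h0⟩
  have hclosed : IsClosed T := by
    have h2 : T = Icc a z ∩ f ⁻¹' (Ici c) := by
      ext x
      exact ⟨fun h => ⟨h.1, h.2⟩, fun h => ⟨h.1, h.2⟩⟩
    rw [h2]
    exact ContinuousOn.preimage_isClosed_of_isClosed (hc.mono hsub) isClosed_Icc isClosed_Ici
  have hcompact : IsCompact T := isCompact_Icc.of_isClosed_subset hclosed hTsub
  have hx1T : sSup T ∈ T := hcompact.sSup_mem ⟨a, haT⟩
  set x1 := sSup T with hx1
  have hbdd : BddAbove T := ⟨z, fun x hx => hx.1.2⟩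
  have hx1z : x1 < z := lt_of_le_of_ne hx1T.1.2 (fun h => by
    rw [← h] at hz; exact absurd hx1T.2 (not_le.mpr hz))
  have hx1Icc : x1 ∈ Icc (0:ℝ) 1 := hsub hx1T.1
  rcases eq_or_lt_of_le hx1T.2 with heq | hlt
  · -- f x1 = c : use derivative
    obtain ⟨y, hy, hfy⟩ := slope_right (hd x1 hx1Icc) hx1Icc.1
      (hcontact x1 hx1T.1.1 (hx1T.1.2.trans hzb) heq.symm) hx1z hzIcc.2
    have : y ∈ T := ⟨⟨hx1T.1.1.trans hy.1.le, hy.2.le⟩, heq.le.trans hfy.le⟩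
    exact absurd (le_csSup hbdd this) (not_le.mpr hy.1)
  · -- c < f x1 : use continuity
    have hev : ∀ᶠ y in 𝓝[Icc (0:ℝ) 1] x1, c < f y :=
      (hc x1 hx1Icc).eventually (eventually_gt_nhds hlt)
    have hsub2 : Ioo x1 z ⊆ Icc (0:ℝ) 1 := fun y hy =>
      ⟨hx1Icc.1.trans hy.1.le, hy.2.le.trans hzIcc.2⟩
    haveI := neBot_right hx1z
    obtain ⟨y, hy, hfy⟩ := ((eventually_mem_nhdsWithin).and
      (hev.filter_mono (nhdsWithin_mono x1 hsub2))).exists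
    have : y ∈ T := ⟨⟨hx1T.1.1.trans hy.1.le, hy.2.le⟩, hfy.le⟩
    exact absurd (le_csSup hbdd this) (not_le.mpr hy.1)

/-- Backward upper barrier: if `f b ≤ c` and at every contact point the derivative is positive,
then `f ≤ c` on `[a,b]`. -/
private lemma barrier_BU {f : ℝ → ℝ} {a b c : ℝ}
    (hc : ContinuousOn f (Icc 0 1))
    (hd : ∀ x ∈ Icc (0:ℝ) 1, DifferentiableWithinAt ℝ f (Icc 0 1) x)
    (ha : 0 ≤ a) (hb : b ≤ 1) (h0 : f b ≤ c)
    (hcontact : ∀ x, a ≤ x → x ≤ b → f x = c → 0 < derivWithin f (Icc 0 1) x) :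
    ∀ x, a ≤ x → x ≤ b → f x ≤ c := by
  by_contra h
  push_neg at h
  obtain ⟨z, haz, hzb, hz⟩ := h
  have hzIcc : z ∈ Icc (0:ℝ) 1 := ⟨ha.trans haz, hzb.trans hb⟩
  have hsub : Icc z b ⊆ Icc (0:ℝ) 1 := fun y hy => ⟨hzIcc.1.trans hy.1, hy.2.trans hb⟩
  set T := {x | x ∈ Icc z b ∧ f x ≤ c} with hT
  have hTsub : T ⊆ Icc z b := fun x hx => hx.1
  have hbT : b ∈ T := ⟨right_mem_Icc.mpr hzb, h0⟩
  have hclosed : IsClosed T := by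
    have h2 : T = Icc z b ∩ f ⁻¹' (Iic c) := by
      ext x
      exact ⟨fun h => ⟨h.1, h.2⟩, fun h => ⟨h.1, h.2⟩⟩
    rw [h2]
    exact ContinuousOn.preimage_isClosed_of_isClosed (hc.mono hsub) isClosed_Icc isClosed_Iic
  have hcompact : IsCompact T := isCompact_Icc.of_isClosed_subset hclosed hTsub
  have hx1T : sInf T ∈ T := hcompact.sInf_mem ⟨b, hbT⟩
  set x1 := sInf T with hx1
  have hbdd : BddBelow T := ⟨z, fun x hx => hx.1.1⟩
  have hzx1 : z < x1 := lt_of_le_of_ne hx1T.1.1 (fun h => by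
    rw [h] at hz; exact absurd hx1T.2 (not_le.mpr hz))
  have hx1Icc : x1 ∈ Icc (0:ℝ) 1 := hsub hx1T.1
  rcases eq_or_lt_of_le hx1T.2 with heq | hlt
  · obtain ⟨y, hy, hfy⟩ := slope_left (hd x1 hx1Icc) hzIcc.1
      (hcontact x1 (haz.trans hzx1.le) hx1T.1.2 heq) hzx1 hx1Icc.2
    have : y ∈ T := ⟨⟨hy.1.le, hy.2.le.trans hx1T.1.2⟩, by rw [← heq]; exact hfy.le⟩
    exact absurd (csInf_le hbdd this) (not_le.mpr hy.2)
  · have hev : ∀ᶠ y in 𝓝[Icc (0:ℝ) 1] x1, f y < c :=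
      (hc x1 hx1Icc).eventually (eventually_lt_nhds hlt)
    have hsub2 : Ioo z x1 ⊆ Icc (0:ℝ) 1 := fun y hy =>
      ⟨hzIcc.1.trans hy.1.le, hy.2.le.trans hx1Icc.2⟩
    haveI := neBot_left hzx1
    obtain ⟨y, hy, hfy⟩ := ((eventually_mem_nhdsWithin).and
      (hev.filter_mono (nhdsWithin_mono x1 hsub2))).exists
    have : y ∈ T := ⟨⟨hy.1.le, hy.2.le.trans hx1T.1.2⟩, hfy.le⟩
    exact absurd (csInf_le hbdd this) (not_le.mpr hy.2)

/-- Forward upper barrier: contact derivative negative. -/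
private lemma barrier_FU {f : ℝ → ℝ} {a b c : ℝ}
    (hc : ContinuousOn f (Icc 0 1))
    (hd : ∀ x ∈ Icc (0:ℝ) 1, DifferentiableWithinAt ℝ f (Icc 0 1) x)
    (ha : 0 ≤ a) (hb : b ≤ 1) (h0 : f a ≤ c)
    (hcontact : ∀ x, a ≤ x → x ≤ b → f x = c → derivWithin f (Icc 0 1) x < 0) :
    ∀ x, a ≤ x → x ≤ b → f x ≤ c := by
  have hneg := barrier_FL (f := fun y => -f y) (c := -c) hc.neg
    (fun x hx => (hd x hx).neg) ha hb (by simpa using h0) ?_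
  · intro x hax hxb
    simpa using hneg x hax hxb
  · intro x hax hxb hfx
    have hx : x ∈ Icc (0:ℝ) 1 := ⟨ha.trans hax, hxb.trans hb⟩
    have hder : derivWithin (fun y => -f y) (Icc (0:ℝ) 1) x = -derivWithin f (Icc 0 1) x :=
      ((hd x hx).hasDerivWithinAt.neg).derivWithin (uD x hx)
    rw [hder]
    have : f x = c := by linarith [neg_eq_iff_eq_neg.mp hfx]
    linarith [hcontact x hax hxb this]

/-- Backward lower barrier: contact derivative negative. -/
private lemma barrier_BL {f : ℝ → ℝ} {a b c : ℝ}
    (hc : ContinuousOn f (Icc 0 1))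
    (hd : ∀ x ∈ Icc (0:ℝ) 1, DifferentiableWithinAt ℝ f (Icc 0 1) x)
    (ha : 0 ≤ a) (hb : b ≤ 1) (h0 : c ≤ f b)
    (hcontact : ∀ x, a ≤ x → x ≤ b → f x = c → derivWithin f (Icc 0 1) x < 0) :
    ∀ x, a ≤ x → x ≤ b → c ≤ f x := by
  have hneg := barrier_BU (f := fun y => -f y) (c := -c) hc.neg
    (fun x hx => (hd x hx).neg) ha hb (by simpa using h0) ?_
  · intro x hax hxb
    have := hneg x hax hxb
    simpa using this
  · intro x hax hxb hfx
    have hx : x ∈ Icc (0:ℝ) 1 := ⟨ha.trans hax, hxb.trans hb⟩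
    have hder : derivWithin (fun y => -f y) (Icc (0:ℝ) 1) x = -derivWithin f (Icc 0 1) x :=
      ((hd x hx).hasDerivWithinAt.neg).derivWithin (uD x hx)
    rw [hder]
    have : f x = c := by linarith [neg_eq_iff_eq_neg.mp hfx]
    linarith [hcontact x hax hxb this]

/-- Increment lower bound from a lower bound on the derivative in the interior. -/
private lemma incr_lower {f : ℝ → ℝ} {a b q : ℝ}
    (hc : ContinuousOn f (Icc 0 1))
    (hd : ∀ x ∈ Icc (0:ℝ) 1, DifferentiableWithinAt ℝ f (Icc 0 1) x)
    (ha : 0 ≤ a) (hb : b ≤ 1) (hab : a ≤ b)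
    (hq : ∀ x, a < x → x < b → q ≤ derivWithin f (Icc 0 1) x) :
    f a + q * (b - a) ≤ f b := by
  have hsub : Icc a b ⊆ Icc (0:ℝ) 1 := fun y hy => ⟨ha.trans hy.1, hy.2.trans hb⟩
  have hmono : MonotoneOn (fun x => f x - q * x) (Icc a b) := by
    apply monotoneOn_of_deriv_nonneg (convex_Icc a b)
    · exact (hc.mono hsub).sub ((continuous_const.mul continuous_id).continuousOn)
    · rw [interior_Icc]
      intro x hx
      have hx01 : x ∈ Ioo (0:ℝ) 1 := ⟨lt_of_le_of_lt ha hx.1, lt_of_lt_of_le hx.2 hb⟩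
      have hda : HasDerivAt f (derivWithin f (Icc 0 1) x) x :=
        ((hd x (Ioo_subset_Icc_self hx01)).hasDerivWithinAt).hasDerivAt
          (Icc_mem_nhds hx01.1 hx01.2)
      exact ((hda.sub ((hasDerivAt_id x).const_mul q)).differentiableAt).differentiableWithinAt
    · rw [interior_Icc]
      intro x hx
      have hx01 : x ∈ Ioo (0:ℝ) 1 := ⟨lt_of_le_of_lt ha hx.1, lt_of_lt_of_le hx.2 hb⟩
      have hda : HasDerivAt f (derivWithin f (Icc 0 1) x) x :=
        ((hd x (Ioo_subset_Icc_self hx01)).hasDerivWithinAt).hasDerivAt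
          (Icc_mem_nhds hx01.1 hx01.2)
      have : HasDerivAt (fun x => f x - q * x) (derivWithin f (Icc 0 1) x - q) x := by
        exact (hda.sub ((hasDerivAt_id x).const_mul q)).congr_deriv (by ring)
      rw [this.deriv]
      linarith [hq x hx.1 hx.2]
  have := hmono (left_mem_Icc.mpr hab) (right_mem_Icc.mpr hab) hab
  simp only at this
  linarith

/-- Increment upper bound from an upper bound on the derivative in the interior. -/
private lemma incr_upper {f : ℝ → ℝ} {a b q : ℝ}
    (hc : ContinuousOn f (Icc 0 1))
    (hd : ∀ x ∈ Icc (0:ℝ) 1, DifferentiableWithinAt ℝ f (Icc 0 1) x)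
    (ha : 0 ≤ a) (hb : b ≤ 1) (hab : a ≤ b)
    (hq : ∀ x, a < x → x < b → derivWithin f (Icc 0 1) x ≤ q) :
    f b ≤ f a + q * (b - a) := by
  have := incr_lower (f := fun y => -f y) (q := -q) hc.neg (fun x hx => (hd x hx).neg)
    ha hb hab ?_
  · linarith
  · intro x hax hxb
    have hx : x ∈ Icc (0:ℝ) 1 := ⟨ha.trans hax.le, hxb.le.trans hb⟩
    have hder : derivWithin (fun y => -f y) (Icc (0:ℝ) 1) x = -derivWithin f (Icc 0 1) x :=
      ((hd x hx).hasDerivWithinAt.neg).derivWithin (uD x hx)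
    rw [hder]
    linarith [hq x hax hxb]

private lemma sol_setup {k : ℝ → ℝ} (hk : ContDiff ℝ 2 k)
    (hknz : ∀ x ∈ Icc (0:ℝ) 1, 0 < k x)
    {ε α β : ℝ} (hε : 0 < ε) {ρ : ℝ → ℝ} (h : IsStatSol k ε α β ρ) :
    ContinuousOn ρ (Icc 0 1) ∧
    (∀ x ∈ Icc (0:ℝ) 1, DifferentiableWithinAt ℝ ρ (Icc 0 1) x) ∧
    (∀ x ∈ Icc (0:ℝ) 1, flux ε ρ x = (k 0 * flux ε ρ 0) / k x) ∧
    (∀ x ∈ Icc (0:ℝ) 1, derivWithin ρ (Icc 0 1) x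
       = (ρ x * (1 - ρ x) - (k 0 * flux ε ρ 0) / k x) / ε) := by
  obtain ⟨hreg, hF, hb0, hb1⟩ := h
  have hcont := hreg.continuousOn
  have hdiff : ∀ x ∈ Icc (0:ℝ) 1, DifferentiableWithinAt ℝ ρ (Icc 0 1) x :=
    fun x hx => hreg.differentiableOn (by norm_num) x hx
  have hρ' : ContDiffOn ℝ 1 (derivWithin ρ (Icc (0:ℝ) 1)) (Icc (0:ℝ) 1) :=
    hreg.derivWithin uD (by norm_num)
  have hfluxd : DifferentiableOn ℝ (flux ε ρ) (Icc (0:ℝ) 1) := by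
    have hfl : flux ε ρ = fun x => -ε * derivWithin ρ (Icc (0:ℝ) 1) x + ρ x * (1 - ρ x) := rfl
    rw [hfl]
    exact ((differentiableOn_const _).mul (hρ'.differentiableOn (by norm_num))).add
      ((hreg.differentiableOn (by norm_num)).mul
        ((differentiableOn_const _).sub (hreg.differentiableOn (by norm_num))))
  have hFd : DifferentiableOn ℝ (fun x => k x * flux ε ρ x) (Icc (0:ℝ) 1) :=
    ((hk.differentiable (by norm_num)).differentiableOn).mul hfluxd
  have hconst : ∀ x ∈ Icc (0:ℝ) 1, k x * flux ε ρ x = k 0 * flux ε ρ 0 := by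
    intro x hx
    have := constant_of_derivWithin_zero hFd (fun y hy => hF y (Ico_subset_Icc_self hy)) x hx
    simpa using this
  have hfluxeq : ∀ x ∈ Icc (0:ℝ) 1, flux ε ρ x = (k 0 * flux ε ρ 0) / k x := by
    intro x hx
    rw [eq_div_iff (ne_of_gt (hknz x hx)), mul_comm]
    exact hconst x hx
  refine ⟨hcont, hdiff, hfluxeq, ?_⟩
  intro x hx
  have hfx : -ε * derivWithin ρ (Icc (0:ℝ) 1) x + ρ x * (1 - ρ x)
      = (k 0 * flux ε ρ 0) / k x := hfluxeq x hx
  field_simp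
  linarith

private lemma K_not_high {k ρ : ℝ → ℝ} {K m ε δ' w ξs α β : ℝ}
    (hc : ContinuousOn ρ (Icc 0 1))
    (hd : ∀ x ∈ Icc (0:ℝ) 1, DifferentiableWithinAt ℝ ρ (Icc 0 1) x)
    (hode : ∀ x ∈ Icc (0:ℝ) 1, derivWithin ρ (Icc 0 1) x = (ρ x * (1 - ρ x) - K / k x) / ε)
    (hkm : ∀ x ∈ Icc (0:ℝ) 1, m ≤ k x) (hm : 0 < m)
    (hρ0 : ρ 0 = 1 - K / (α * k 0)) (hρ1 : ρ 1 = K / (β * k 1))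
    (hα : 0 < α) (hβ : 0 < β) (hδ' : 0 < δ')
    (hw : 0 < w) (hw0 : 0 ≤ ξs - w) (hw1 : ξs + w ≤ 1)
    (hkw : ∀ x, ξs - w ≤ x → x ≤ ξs + w → k x ≤ m + δ')
    (hε : 0 < ε) (hεs : ε < 2*w*(3*δ'/(4*(m+δ'))))
    (hK : m/4 + δ' ≤ K) : False := by
  have hKpos : 0 < K := lt_of_lt_of_le (by positivity) hK
  have hk0 : 0 < k 0 := lt_of_lt_of_le hm (hkm 0 ⟨le_rfl, zero_le_one⟩)
  have hk1 : 0 < k 1 := lt_of_lt_of_le hm (hkm 1 ⟨zero_le_one, le_rfl⟩)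
  have hρle1 : ∀ x, 0 ≤ x → x ≤ 1 → ρ x ≤ 1 := by
    apply barrier_FU hc hd le_rfl le_rfl
    · rw [hρ0]
      have : 0 < K/(α * k 0) := by positivity
      linarith
    · intro x h0x hx1 hfx
      have hx : x ∈ Icc (0:ℝ) 1 := ⟨h0x, hx1⟩
      have hkx : 0 < k x := lt_of_lt_of_le hm (hkm x hx)
      rw [hode x hx, hfx]
      apply div_neg_of_neg_of_pos _ hε
      have : 0 < K / k x := by positivity
      nlinarith
  have hρge0 : ∀ x, 0 ≤ x → x ≤ 1 → 0 ≤ ρ x := by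
    apply barrier_BL hc hd le_rfl le_rfl
    · rw [hρ1]; positivity
    · intro x h0x hx1 hfx
      have hx : x ∈ Icc (0:ℝ) 1 := ⟨h0x, hx1⟩
      have hkx : 0 < k x := lt_of_lt_of_le hm (hkm x hx)
      rw [hode x hx, hfx]
      apply div_neg_of_neg_of_pos _ hε
      have : 0 < K / k x := by positivity
      nlinarith
  set cA := 3*δ'/(4*(m+δ')) with hcA
  have hcApos : 0 < cA := by positivity
  have hdecr : ρ (ξs + w) ≤ ρ (ξs - w) + (-(cA/ε)) * ((ξs + w) - (ξs - w)) := by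
    apply incr_upper hc hd hw0 hw1 (by linarith)
    intro x hax hxb
    have hx : x ∈ Icc (0:ℝ) 1 := ⟨hw0.trans hax.le, hxb.le.trans hw1⟩
    have hkx : 0 < k x := lt_of_lt_of_le hm (hkm x hx)
    have hkxu : k x ≤ m + δ' := hkw x hax.le hxb.le
    rw [hode x hx, ← neg_div]
    apply (div_le_div_iff_of_pos_right hε).mpr
    have hb1 : ρ x * (1 - ρ x) ≤ 1/4 := by nlinarith [sq_nonneg (ρ x - 1/2)]
    have hb2 : (m/4 + δ')/(m + δ') ≤ K / k x := by
      rw [div_le_div_iff₀ (by linarith) hkx]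
      nlinarith
    have key : (1:ℝ)/4 - (m/4 + δ')/(m + δ') = -cA := by
      rw [hcA]; field_simp; ring
    linarith
  have h0 := hρge0 (ξs + w) (by linarith) hw1
  have h1 := hρle1 (ξs - w) hw0 (by linarith)
  have hgt : 1 < 2*w*cA/ε := (one_lt_div hε).mpr hεs
  have hexp : (-(cA/ε)) * ((ξs + w) - (ξs - w)) = -(2*w*cA/ε) := by ring
  linarith

private lemma K_pos {k ρ : ℝ → ℝ} {K m ε α β : ℝ}
    (hc : ContinuousOn ρ (Icc 0 1))
    (hd : ∀ x ∈ Icc (0:ℝ) 1, DifferentiableWithinAt ℝ ρ (Icc 0 1) x)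
    (hode : ∀ x ∈ Icc (0:ℝ) 1, derivWithin ρ (Icc 0 1) x = (ρ x * (1 - ρ x) - K / k x) / ε)
    (hkm : ∀ x ∈ Icc (0:ℝ) 1, m ≤ k x) (hm : 0 < m)
    (hρ0 : ρ 0 = 1 - K / (α * k 0)) (hρ1 : ρ 1 = K / (β * k 1))
    (hα : 0 < α) (hβ : 0 < β) (hε : 0 < ε) : 0 < K := by
  have hk0 : 0 < k 0 := lt_of_lt_of_le hm (hkm 0 ⟨le_rfl, zero_le_one⟩)
  have hk1 : 0 < k 1 := lt_of_lt_of_le hm (hkm 1 ⟨zero_le_one, le_rfl⟩)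
  by_contra h
  push_neg at h
  rcases lt_or_eq_of_le h with hneg | hzero
  · -- K < 0
    have hform : ∀ x, 0 ≤ x → x ≤ 1 → ρ x ≤ 0 := by
      apply barrier_BU hc hd le_rfl le_rfl
      · rw [hρ1]
        apply div_nonpos_of_nonpos_of_nonneg hneg.le (by positivity)
      · intro x h0x hx1 hfx
        have hx : x ∈ Icc (0:ℝ) 1 := ⟨h0x, hx1⟩
        have hkx : 0 < k x := lt_of_lt_of_le hm (hkm x hx)
        rw [hode x hx, hfx]
        apply div_pos _ hε
        have : K / k x < 0 := div_neg_of_neg_of_pos hneg hkx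
        nlinarith
    have h2 := hform 0 le_rfl zero_le_one
    rw [hρ0] at h2
    have hKdiv : K / (α * k 0) < 0 := div_neg_of_neg_of_pos hneg (by positivity)
    linarith
  · -- K = 0
    subst hzero
    have hform : ∀ x, 0 ≤ x → x ≤ 1 → (1:ℝ)/2 ≤ ρ x := by
      apply barrier_FL hc hd le_rfl le_rfl
      · rw [hρ0]; norm_num
      · intro x h0x hx1 hfx
        have hx : x ∈ Icc (0:ℝ) 1 := ⟨h0x, hx1⟩
        rw [hode x hx, hfx]
        apply div_pos _ hε
        norm_num
    have := hform 1 zero_le_one le_rfl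
    rw [hρ1] at this
    norm_num at this


set_option maxHeartbeats 1000000 in
private lemma stage1_hard {k ρ : ℝ → ℝ} {K m ε α r0 η : ℝ}
    (hc : ContinuousOn ρ (Icc 0 1))
    (hd : ∀ x ∈ Icc (0:ℝ) 1, DifferentiableWithinAt ℝ ρ (Icc 0 1) x)
    (hode : ∀ x ∈ Icc (0:ℝ) 1, derivWithin ρ (Icc 0 1) x = (ρ x * (1 - ρ x) - K / k x) / ε)
    (hkm : ∀ x ∈ Icc (0:ℝ) 1, m ≤ k x) (hm : 0 < m)
    (hρ0 : ρ 0 = 1 - K / (α * k 0))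
    (hr0q : r0 * (1 - r0) = m / (4 * k 0)) (hr0a : 0 < r0) (hr0b : r0 < 1/2)
    (hα1 : r0 < α) (hα2 : α < 1 - r0)
    (hK : 0 < K) (hKu : K ≤ m/4)
    (hη : 0 < η) (hη4 : η ≤ 1/4)
    (hηk : ∀ x, 0 ≤ x → x ≤ η → |k x - k 0| ≤ m * (α*(1-α) - m/(4*k 0)))
    (hε : 0 < ε) (hεs : ε < (α*(1-α) - m/(4*k 0))/4 * η) :
    ∃ x', 0 ≤ x' ∧ x' ≤ η ∧ 1/2 ≤ ρ x' := by
  have hk0 : 0 < k 0 := lt_of_lt_of_le hm (hkm 0 ⟨le_rfl, zero_le_one⟩)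
  have hαpos : 0 < α := lt_trans hr0a hα1
  obtain ⟨P, hP⟩ : ∃ P, P = m / (4 * k 0) := ⟨_, rfl⟩
  obtain ⟨t₀, ht⟩ : ∃ t, t = K / (α * k 0) := ⟨_, rfl⟩
  obtain ⟨g₄, hg⟩ : ∃ g, g = α*(1-α) - P := ⟨_, rfl⟩
  rw [← hP] at hr0q
  rw [← ht] at hρ0
  rw [← hP, ← hg] at hηk hεs
  have hPpos : 0 < P := by rw [hP]; positivity
  have hg₄ : 0 < g₄ := by
    rw [hg]
    nlinarith [mul_pos (sub_pos.mpr hα1) (sub_pos.mpr hα2)]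
  have ht₀pos : 0 < t₀ := by rw [ht]; positivity
  have hKt : K = t₀ * (α * k 0) := by rw [ht]; field_simp
  have hPk : P * (4 * k 0) = m := by rw [hP]; field_simp
  have hαt : α * t₀ ≤ P := by nlinarith
  by_cases hcase : t₀ ≤ 1/2
  · refine ⟨0, le_rfl, hη.le, ?_⟩
    rw [hρ0]; linarith
  · push_neg at hcase
    obtain ⟨c₁, hc₁⟩ : ∃ c, c = 1 - t₀ := ⟨_, rfl⟩
    have hρ00 : ρ 0 = c₁ := by rw [hρ0, hc₁]
    have ht₀lt : t₀ < 1 - r0 := by nlinarith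
    have hc₁pos : 0 < c₁ := by rw [hc₁]; linarith [hr0a]
    have h1αt : α * (1 - α - t₀) ≥ g₄ := by rw [hg]; nlinarith
    have h1at' : 0 < 1 - α - t₀ := by nlinarith
    have hquad : t₀ * (1 - α - t₀) ≥ g₄/2 := by nlinarith
    -- error bound for K/k x vs K/k 0 on [0, η]
    have hKk0 : K / k 0 = t₀ * α := by rw [hKt]; field_simp
    have herr : ∀ x, 0 ≤ x → x ≤ η → K / k x ≤ K / k 0 + g₄/4 := by
      intro x h0x hxη
      have hx : x ∈ Icc (0:ℝ) 1 := ⟨h0x, hxη.trans (by linarith)⟩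
      have hkx : 0 < k x := lt_of_lt_of_le hm (hkm x hx)
      rcases le_or_gt (k 0) (k x) with hcmp | hcmp
      · have h6 : K / k x ≤ K / k 0 := div_le_div_of_nonneg_left hK.le hk0 hcmp
        linarith
      · have h9 : k 0 - k x ≤ m * g₄ := by
          have h9' := hηk x h0x hxη
          rw [abs_le] at h9'
          linarith [h9'.1]
        have h7 : K/k x - K/k 0 = K*(k 0 - k x)/(k x * k 0) := by field_simp
        have hnum9 : K*(k 0 - k x) ≤ (m/4)*(m*g₄) :=
          mul_le_mul hKu h9 (by linarith) (by positivity)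
        have hden9 : m*m ≤ k x * k 0 :=
          mul_le_mul (hkm x hx) (hkm 0 ⟨le_rfl, zero_le_one⟩) hm.le (by linarith)
        have h8 : K*(k 0 - k x)/(k x * k 0) ≤ (m/4)*(m*g₄)/(m*m) := by
          calc K*(k 0 - k x)/(k x * k 0) ≤ K*(k 0 - k x)/(m*m) :=
                div_le_div_of_nonneg_left (by nlinarith) (by positivity) hden9
            _ ≤ (m/4)*(m*g₄)/(m*m) := by
                apply div_le_div_of_nonneg_right hnum9 (by positivity)
        have h10 : (m/4)*(m*g₄)/(m*m) = g₄/4 := by field_simp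
        linarith [h7, h8]
    -- numerator bound at levels in [c₁, 1/2]
    have hnum : ∀ x, 0 ≤ x → x ≤ η → ∀ v, c₁ ≤ v → v ≤ 1/2 → g₄/4 ≤ v * (1 - v) - K / k x := by
      intro x h0x hxη v hv1 hv2
      have hvq : c₁ * (1 - c₁) ≤ v * (1 - v) := by nlinarith [hc₁]
      have hcc : c₁ * (1 - c₁) = t₀ * (1 - t₀) := by rw [hc₁]; ring
      have h11 := herr x h0x hxη
      nlinarith [hquad]
    -- lower barrier at c₁ on [0, η]
    have hbar : ∀ x, 0 ≤ x → x ≤ η → c₁ ≤ ρ x := by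
      apply barrier_FL hc hd le_rfl (by linarith)
      · rw [hρ00]
      · intro x h0x hxη hfx
        have hx : x ∈ Icc (0:ℝ) 1 := ⟨h0x, hxη.trans (by linarith)⟩
        rw [hode x hx, hfx]
        apply div_pos _ hε
        have := hnum x h0x hxη c₁ le_rfl (by linarith)
        linarith
    by_contra hnot
    push_neg at hnot
    have hgrow : ρ 0 + (g₄/4)/ε * (η - 0) ≤ ρ η := by
      apply incr_lower hc hd le_rfl (by linarith) hη.le
      intro x h0x hxη
      have hx : x ∈ Icc (0:ℝ) 1 := ⟨h0x.le, hxη.le.trans (by linarith)⟩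
      rw [hode x hx]
      apply (div_le_div_iff_of_pos_right hε).mpr
      exact hnum x h0x.le hxη.le (ρ x) (hbar x h0x.le hxη.le) (hnot x h0x.le hxη.le).le
    have hlast := hnot η hη.le le_rfl
    have hη1 : 1 < (g₄/4)/ε * η := by
      rw [div_mul_eq_mul_div, lt_div_iff₀ hε]
      linarith [hεs]
    rw [hρ00] at hgrow
    linarith

private lemma Kdiv_err {k : ℝ → ℝ} {K m x0 x e : ℝ}
    (hkx : 0 < k x) (hk0 : 0 < k x0) (hkxm : m ≤ k x) (hk0m : m ≤ k x0)
    (hm : 0 < m) (hK : 0 < K) (hKu : K ≤ m/4)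
    (hdk : |k x - k x0| ≤ m * e) (he : 0 ≤ e) :
    K / k x ≤ K / k x0 + e/4 := by
  rcases le_or_gt (k x0) (k x) with hcmp | hcmp
  · have h6 : K / k x ≤ K / k x0 := div_le_div_of_nonneg_left hK.le hk0 hcmp
    linarith
  · have h9 : k x0 - k x ≤ m * e := by
      rw [abs_le] at hdk
      linarith [hdk.1]
    have h7 : K/k x - K/k x0 = K*(k x0 - k x)/(k x * k x0) := by field_simp
    have hnum9 : K*(k x0 - k x) ≤ (m/4)*(m*e) :=
      mul_le_mul hKu h9 (by linarith) (by positivity)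
    have hden9 : m*m ≤ k x * k x0 := mul_le_mul hkxm hk0m hm.le (by linarith)
    have h8 : K*(k x0 - k x)/(k x * k x0) ≤ (m/4)*(m*e)/(m*m) := by
      calc K*(k x0 - k x)/(k x * k x0) ≤ K*(k x0 - k x)/(m*m) :=
            div_le_div_of_nonneg_left (by nlinarith) (by positivity) hden9
        _ ≤ (m/4)*(m*e)/(m*m) := div_le_div_of_nonneg_right hnum9 (by positivity)
    have h10 : (m/4)*(m*e)/(m*m) = e/4 := by field_simp
    linarith [h7, h8]

set_option maxHeartbeats 1000000 in
private lemma stage3_hard {k ρ : ℝ → ℝ} {K m ε β r1 δ' η' c : ℝ}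
    (hc : ContinuousOn ρ (Icc 0 1))
    (hd : ∀ x ∈ Icc (0:ℝ) 1, DifferentiableWithinAt ℝ ρ (Icc 0 1) x)
    (hode : ∀ x ∈ Icc (0:ℝ) 1, derivWithin ρ (Icc 0 1) x = (ρ x * (1 - ρ x) - K / k x) / ε)
    (hkm : ∀ x ∈ Icc (0:ℝ) 1, m ≤ k x) (hm : 0 < m)
    (hρ1 : ρ 1 = K / (β * k 1))
    (hr1q : r1 * (1 - r1) = m / (4 * k 1)) (hr1a : 1/2 < r1) (hr1b : r1 < 1)
    (hβ1 : 1 - r1 < β) (hβ2 : β < r1)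
    (hK : 0 < K) (hKu : K ≤ m/4 - δ') (hδ' : 0 < δ')
    (hcc : c * (1 - c) = 1/4 - δ'/(2*m)) (hc0 : 0 ≤ c) (hc12 : c ≤ 1/2)
    (hρc : ∀ x, 1 - η' ≤ x → x ≤ 1 → c ≤ ρ x)
    (hη' : 0 < η') (hη4 : η' ≤ 1/4)
    (hηk : ∀ x, 1 - η' ≤ x → x ≤ 1 → |k x - k 1| ≤ min (m * (β*(β*(1-β) - m/(4*k 1)))) δ')
    (hε : 0 < ε)
    (hεs : ε < min (δ'/(4*m)) (β*(β*(1-β) - m/(4*k 1))/4) * (η'/2)) :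
    False := by
  have hk1 : 0 < k 1 := lt_of_lt_of_le hm (hkm 1 ⟨zero_le_one, le_rfl⟩)
  have hβpos : 0 < β := by linarith
  obtain ⟨Q1, hQ⟩ : ∃ Q, Q = m / (4 * k 1) := ⟨_, rfl⟩
  obtain ⟨g₃, hg⟩ : ∃ g, g = β*(1-β) - Q1 := ⟨_, rfl⟩
  obtain ⟨t, ht⟩ : ∃ t, t = K / (β * k 1) := ⟨_, rfl⟩
  rw [← hQ] at hr1q
  rw [← ht] at hρ1
  rw [← hQ, ← hg] at hηk hεs
  have hQpos : 0 < Q1 := by rw [hQ]; positivity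
  have hQk : Q1 * (4 * k 1) = m := by rw [hQ]; field_simp
  have hg₃ : 0 < g₃ := by
    rw [hg]
    nlinarith [mul_pos (sub_pos.mpr hβ2) (sub_pos.mpr hβ1)]
  have htpos : 0 < t := by rw [ht]; positivity
  have hKt : K = t * (β * k 1) := by rw [ht]; field_simp
  have hβt' : β * t ≤ Q1 := by
    have h1 : (β * t) * k 1 ≤ Q1 * k 1 := by nlinarith [hKt, hKu, hQk, hδ'.le]
    exact le_of_mul_le_mul_right h1 hk1
  have hβ1t : β * (1 - β - t) ≥ g₃ := by rw [hg]; linarith [hβt']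
  have h1bt : 0 < 1 - β - t := by nlinarith [hβ1t, hg₃, hβpos]
  obtain ⟨c₄, hc₄⟩ : ∃ c₄, c₄ = (t + 1 - β)/2 := ⟨_, rfl⟩
  have hc₄t : c₄ - t = (1 - β - t)/2 := by rw [hc₄]; ring
  have hc₄g : c₄ ≥ t + g₃/2 := by nlinarith
  have hc₄lt1 : c₄ < 1 := by rw [hc₄]; linarith
  have hKk1 : K / k 1 = β * t := by rw [hKt]; field_simp
  have hQc₄ : c₄*(1-c₄) - β*t ≥ β*(1-β-t)/2 := by
    rw [hc₄]
    nlinarith [mul_nonneg h1bt.le (by nlinarith : (0:ℝ) ≤ 1 + t - β)]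
  have hKk1m : K / k 1 ≤ 1/4 - δ'/m := by
    have h1 : K / k 1 ≤ K / m := div_le_div_of_nonneg_left hK.le hm (hkm 1 ⟨zero_le_one, le_rfl⟩)
    have h2 : K / m ≤ (m/4 - δ')/m := div_le_div_of_nonneg_right hKu hm.le
    have h3 : (m/4 - δ')/m = 1/4 - δ'/m := by field_simp
    linarith
  -- error bounds on [1-η', 1]
  have herr1 : ∀ x, 1 - η' ≤ x → x ≤ 1 → K / k x ≤ K / k 1 + (β*g₃)/4 := by
    intro x h1x hx1
    have hx : x ∈ Icc (0:ℝ) 1 := ⟨by linarith, hx1⟩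
    have hkx : 0 < k x := lt_of_lt_of_le hm (hkm x hx)
    refine Kdiv_err hkx hk1 (hkm x hx) (hkm 1 ⟨zero_le_one, le_rfl⟩) hm hK (by linarith) ?_
      (by positivity)
    exact le_trans (hηk x h1x hx1) (min_le_left _ _)
  have herr2 : ∀ x, 1 - η' ≤ x → x ≤ 1 → K / k x ≤ K / k 1 + (δ'/m)/4 := by
    intro x h1x hx1
    have hx : x ∈ Icc (0:ℝ) 1 := ⟨by linarith, hx1⟩
    have hkx : 0 < k x := lt_of_lt_of_le hm (hkm x hx)
    refine Kdiv_err hkx hk1 (hkm x hx) (hkm 1 ⟨zero_le_one, le_rfl⟩) hm hK (by linarith) ?_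
      (by positivity)
    have := le_trans (hηk x h1x hx1) (min_le_right _ _)
    have hmm : m * (δ'/m) = δ' := by field_simp
    linarith
  obtain ⟨q₃, hq₃⟩ : ∃ q, q = min (δ'/(4*m)) (β*g₃/4) := ⟨_, rfl⟩
  rw [← hq₃] at hεs
  have hq₃pos : 0 < q₃ := by rw [hq₃]; positivity
  rcases le_or_gt c₄ c with hcase | hcase
  · have := hρc 1 (by linarith) le_rfl
    rw [hρ1] at this
    linarith
  · -- growth then barrier
    have hband : ∀ x, 1 - η' ≤ x → x ≤ 1 → ∀ v, c ≤ v → v ≤ c₄ →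
        q₃ ≤ v * (1 - v) - K / k x := by
      intro x h1x hx1 v hv1 hv2
      have he1 := herr1 x h1x hx1
      have he2 := herr2 x h1x hx1
      have hendc : q₃ ≤ c*(1-c) - K / k x := by
        have hq4 : (δ'/m)/4 = δ'/(4*m) := by rw [div_div, mul_comm]
        have hmin : q₃ ≤ δ'/(4*m) := by rw [hq₃]; exact min_le_left _ _
        have hdm : δ'/(2*m) + δ'/(4*m) + δ'/(4*m) = δ'/m := by field_simp; ring
        linarith [hcc, hKk1m]
      have hendc4 : q₃ ≤ c₄*(1-c₄) - K / k x := by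
        have hmin : q₃ ≤ β*g₃/4 := by rw [hq₃]; exact min_le_right _ _
        have hββ : β*g₃ ≤ g₃ := by nlinarith [hg₃.le, hβpos.le]
        linarith [hQc₄, hβ1t, hKk1]
      rcases le_or_gt (v + c) 1 with hvc | hvc
      · have : c*(1-c) ≤ v*(1-v) := by
          nlinarith [mul_nonneg (sub_nonneg.mpr hv1) (by linarith : (0:ℝ) ≤ 1 - v - c)]
        linarith
      · have : c₄*(1-c₄) ≤ v*(1-v) := by
          nlinarith [mul_nonneg (sub_nonneg.mpr hv2) (by linarith : (0:ℝ) ≤ v + c₄ - 1)]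
        linarith
    have hx2 : ∃ x2, 1 - η' ≤ x2 ∧ x2 ≤ 1 - η'/2 ∧ c₄ ≤ ρ x2 := by
      by_contra hnot
      push_neg at hnot
      have hgrow : ρ (1-η') + q₃/ε * ((1 - η'/2) - (1 - η')) ≤ ρ (1 - η'/2) := by
        apply incr_lower hc hd (by linarith) (by linarith) (by linarith)
        intro x hax hxb
        have hx : x ∈ Icc (0:ℝ) 1 := ⟨by linarith, by linarith⟩
        rw [hode x hx]
        apply (div_le_div_iff_of_pos_right hε).mpr
        exact hband x (by linarith) (by linarith) (ρ x)
          (hρc x (by linarith) (by linarith))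
          (hnot x (by linarith) (by linarith)).le
      have hlast := hnot (1 - η'/2) (by linarith) le_rfl
      have hρlow := hρc (1 - η') (by linarith) (by linarith)
      have hbig : 1 < q₃/ε * (η'/2) := by
        rw [div_mul_eq_mul_div, lt_div_iff₀ hε]
        linarith [hεs]
      have hsimp : (1 - η'/2) - (1 - η') = η'/2 := by ring
      rw [hsimp] at hgrow
      linarith
    obtain ⟨x2, hx2a, hx2b, hx2c⟩ := hx2
    have hfin : ∀ x, x2 ≤ x → x ≤ 1 → c₄ ≤ ρ x := by
      apply barrier_FL hc hd (by linarith) le_rfl hx2c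
      intro x hax hxb hfx
      have hx : x ∈ Icc (0:ℝ) 1 := ⟨by linarith, hxb⟩
      rw [hode x hx, hfx]
      apply div_pos _ hε
      have := hband x (by linarith) hxb c₄ hcase.le le_rfl
      linarith
    have := hfin 1 (by linarith) le_rfl
    rw [hρ1] at this
    linarith

set_option maxHeartbeats 1000000 in
private lemma K_not_low {k : ℝ → ℝ} {m α β r0 r1 δ' : ℝ}
    (hk : ContDiff ℝ 2 k)
    (hkm : ∀ x ∈ Icc (0:ℝ) 1, m ≤ k x) (hm : 0 < m)
    (hr0q : r0 * (1 - r0) = m / (4 * k 0)) (hr0a : 0 < r0) (hr0b : r0 < 1/2)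
    (hr1q : r1 * (1 - r1) = m / (4 * k 1)) (hr1a : 1/2 < r1) (hr1b : r1 < 1)
    (hα1 : r0 < α) (hα2 : α < 1) (hα3 : α ≠ 1 - r0)
    (hβ1 : 1 - r1 < β) (hβ2 : β < 1) (hβ3 : β ≠ r1)
    (hδ' : 0 < δ') (hδm : δ' ≤ m/8) (hδr1 : δ' ≤ 2*m*(r1 - 1/2)^2) :
    ∃ ε₁ > 0, ∀ ε ρ K, 0 < ε → ε < ε₁ →
      ContinuousOn ρ (Icc 0 1) →
      (∀ x ∈ Icc (0:ℝ) 1, DifferentiableWithinAt ℝ ρ (Icc 0 1) x) →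
      (∀ x ∈ Icc (0:ℝ) 1, derivWithin ρ (Icc 0 1) x = (ρ x * (1 - ρ x) - K / k x) / ε) →
      ρ 0 = 1 - K / (α * k 0) → ρ 1 = K / (β * k 1) →
      K ≤ m/4 - δ' → False := by
  have hk0 : 0 < k 0 := lt_of_lt_of_le hm (hkm 0 ⟨le_rfl, zero_le_one⟩)
  have hk1 : 0 < k 1 := lt_of_lt_of_le hm (hkm 1 ⟨zero_le_one, le_rfl⟩)
  have hαpos : 0 < α := lt_trans hr0a hα1
  have hβpos : 0 < β := by linarith
  have hm40 : m = 4 * k 0 * (r0 * (1 - r0)) := by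
    rw [hr0q]; field_simp
  have hm41 : m = 4 * k 1 * (r1 * (1 - r1)) := by
    rw [hr1q]; field_simp
  -- the level c
  obtain ⟨s, hs⟩ : ∃ s, s = Real.sqrt (2*δ'/m) := ⟨_, rfl⟩
  have hs0 : 0 ≤ s := by rw [hs]; positivity
  have hs2 : s^2 = 2*δ'/m := by rw [hs]; exact Real.sq_sqrt (by positivity)
  have hs1 : s ≤ 1 := by
    nlinarith [hs2, (by rw [div_le_one hm]; linarith : 2*δ'/m ≤ 1)]
  obtain ⟨c, hcdef⟩ : ∃ c, c = (1 - s)/2 := ⟨_, rfl⟩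
  have hcc : c * (1 - c) = 1/4 - δ'/(2*m) := by
    rw [hcdef]
    linear_combination (-1/4 : ℝ) * hs2
  have hc0 : 0 ≤ c := by rw [hcdef]; linarith
  have hc12 : c ≤ 1/2 := by rw [hcdef]; linarith
  -- stage 1 package
  obtain ⟨η, hη, hη4, εa, hεa, hstage1⟩ : ∃ η, 0 < η ∧ η ≤ 1/4 ∧ ∃ εa, 0 < εa ∧
      ∀ ε ρ K, 0 < ε → ε < εa →
      ContinuousOn ρ (Icc 0 1) →
      (∀ x ∈ Icc (0:ℝ) 1, DifferentiableWithinAt ℝ ρ (Icc 0 1) x) →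
      (∀ x ∈ Icc (0:ℝ) 1, derivWithin ρ (Icc 0 1) x = (ρ x * (1 - ρ x) - K / k x) / ε) →
      ρ 0 = 1 - K / (α * k 0) → 0 < K → K ≤ m/4 - δ' →
      ∃ x', 0 ≤ x' ∧ x' ≤ η ∧ 1/2 ≤ ρ x' := by
    rcases lt_or_gt_of_ne hα3 with hαlt | hαgt
    · -- hard case: need continuity window at 0
      have hg₄ : 0 < α*(1-α) - m/(4*k 0) := by
        rw [← hr0q]
        nlinarith [mul_pos (sub_pos.mpr hα1) (sub_pos.mpr hαlt)]
      have hcont : ContinuousAt k 0 := hk.continuous.continuousAt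
      rw [Metric.continuousAt_iff] at hcont
      obtain ⟨d, hd0, hdk⟩ := hcont (m*(α*(1-α) - m/(4*k 0))) (by positivity)
      refine ⟨min (d/2) (1/4), by positivity, min_le_right _ _,
        (α*(1-α) - m/(4*k 0))/4 * min (d/2) (1/4), by positivity, ?_⟩
      intro ε ρ K hε hεlt hc hdd hode hρ0 hK hKle
      refine stage1_hard hc hdd hode hkm hm hρ0 hr0q hr0a hr0b hα1 hαlt hK
        (by linarith) (by positivity) (min_le_right _ _) ?_ hε hεlt
      intro x h0x hxη
      have : dist x 0 < d := by
        rw [Real.dist_eq, sub_zero, abs_of_nonneg h0x]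
        have := min_le_left (d/2) (1/4)
        linarith [hxη, this]
      have := hdk this
      rw [Real.dist_eq] at this
      exact this.le
    · -- easy case : α > 1 - r0, then ρ 0 ≥ 1/2 already
      refine ⟨1/4, by norm_num, le_rfl, 1, one_pos, ?_⟩
      intro ε ρ K hε hεlt hc hdd hode hρ0 hK hKle
      refine ⟨0, le_rfl, by norm_num, ?_⟩
      rw [hρ0]
      have hKr : K / (α * k 0) < r0 := by
        rw [div_lt_iff₀ (by positivity)]
        nlinarith [hm40]
      linarith
  -- stage 3 package
  obtain ⟨η', hη', hη4', εb, hεb, hstage3⟩ : ∃ η', 0 < η' ∧ η' ≤ 1/4 ∧ ∃ εb, 0 < εb ∧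
      ∀ ε ρ K, 0 < ε → ε < εb →
      ContinuousOn ρ (Icc 0 1) →
      (∀ x ∈ Icc (0:ℝ) 1, DifferentiableWithinAt ℝ ρ (Icc 0 1) x) →
      (∀ x ∈ Icc (0:ℝ) 1, derivWithin ρ (Icc 0 1) x = (ρ x * (1 - ρ x) - K / k x) / ε) →
      ρ 1 = K / (β * k 1) → 0 < K → K ≤ m/4 - δ' →
      (∀ x, 1 - η' ≤ x → x ≤ 1 → c ≤ ρ x) → False := by
    rcases lt_or_gt_of_ne hβ3 with hβlt | hβgt
    · -- hard case: continuity window at 1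
      have hg₃ : 0 < β*(1-β) - m/(4*k 1) := by
        rw [← hr1q]
        nlinarith [mul_pos (sub_pos.mpr hβlt) (sub_pos.mpr hβ1)]
      have hcont : ContinuousAt k 1 := hk.continuous.continuousAt
      rw [Metric.continuousAt_iff] at hcont
      obtain ⟨d, hd0, hdk⟩ := hcont (min (m*(β*(β*(1-β) - m/(4*k 1)))) δ') (by positivity)
      refine ⟨min (d/2) (1/4), by positivity, min_le_right _ _,
        min (δ'/(4*m)) (β*(β*(1-β) - m/(4*k 1))/4) * (min (d/2) (1/4)/2), by positivity, ?_⟩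
      intro ε ρ K hε hεlt hc hdd hode hρ1 hK hKle hρc
      refine stage3_hard hc hdd hode hkm hm hρ1 hr1q hr1a hr1b hβ1 hβlt hK hKle hδ'
        hcc hc0 hc12 hρc (by positivity) (min_le_right _ _) ?_ hε hεlt
      intro x h1x hx1
      have : dist x 1 < d := by
        rw [Real.dist_eq, abs_lt]
        have := min_le_left (d/2) (1/4)
        constructor
        · linarith
        · linarith
      have := hdk this
      rw [Real.dist_eq] at this
      exact this.le
    · -- easy case : β > r1
      refine ⟨1/4, by norm_num, le_rfl, 1, one_pos, ?_⟩
      intro ε ρ K hε hεlt hc hdd hode hρ1 hK hKle hρc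
      have h1 := hρc 1 (by norm_num) le_rfl
      rw [hρ1] at h1
      have hlt : K / (β * k 1) < 1 - r1 := by
        rw [div_lt_iff₀ (by positivity)]
        nlinarith [hm41, mul_pos (mul_pos (sub_pos.mpr hβgt) (by linarith : (0:ℝ) < 1 - r1)) hk1]
      have hcge : 1 - r1 ≤ c := by
        have hsle : s ≤ 2*r1 - 1 := by
          rw [hs]
          have h2 : 2*δ'/m ≤ (2*r1-1)^2 := by
            rw [div_le_iff₀ hm]
            nlinarith
          calc Real.sqrt (2*δ'/m) ≤ Real.sqrt ((2*r1-1)^2) := Real.sqrt_le_sqrt h2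
            _ = 2*r1 - 1 := Real.sqrt_sq (by linarith)
        rw [hcdef]
        linarith
      linarith
  refine ⟨min εa εb, lt_min hεa hεb, ?_⟩
  intro ε ρ K hε hεlt hcρ hdρ hode hρ0 hρ1 hKle
  have hKpos : 0 < K := K_pos hcρ hdρ hode hkm hm hρ0 hρ1 hαpos hβpos hε
  obtain ⟨x', hx'0, hx'η, hx'ρ⟩ := hstage1 ε ρ K hε (lt_of_lt_of_le hεlt (min_le_left _ _))
    hcρ hdρ hode hρ0 hKpos hKle
  have hρc : ∀ x, x' ≤ x → x ≤ 1 → c ≤ ρ x := by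
    apply barrier_FL hcρ hdρ hx'0 le_rfl (by linarith)
    intro x hax hxb hfx
    have hx : x ∈ Icc (0:ℝ) 1 := ⟨hx'0.trans hax, hxb⟩
    rw [hode x hx, hfx]
    apply div_pos _ hε
    have hKm : K / k x ≤ 1/4 - δ'/m := by
      have h1 : K / k x ≤ K / m := div_le_div_of_nonneg_left hKpos.le hm (hkm x hx)
      have h2 : K / m ≤ (m/4 - δ')/m := div_le_div_of_nonneg_right hKle hm.le
      have h3 : (m/4 - δ')/m = 1/4 - δ'/m := by field_simp
      linarith
    have hδm2 : δ'/(2*m) < δ'/m := by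
      rw [div_lt_div_iff₀ (by positivity) hm]
      nlinarith
    linarith [hcc, hKm]
  exact hstage3 ε ρ K hε (lt_of_lt_of_le hεlt (min_le_right _ _)) hcρ hdρ hode hρ1 hKpos hKle
    (fun x h1x hx1 => hρc x (by linarith [hx'η, hη4, hη4']) hx1)

set_option maxHeartbeats 1000000 in
/-- In the transitional/canard parameter regions
(`ρ_c^0 < α < 1`, `α ≠ 1 - ρ_c^0`; `1 - ρ_c^1 < β < 1`, `β ≠ ρ_c^1`), the boundary
densities of any solution of the stationary boundary value problem converge, as `ε → 0`,
to `ρ(0) → 1 - k(ξ*)/(4αk(0))` and `ρ(1) → k(ξ*)/(4βk(1))`. -/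
theorem bvp_boundary_densities_canard_regime
    (k : ℝ → ℝ) (ξs : ℝ)
    (hk : ContDiff ℝ 2 k)
    (hkpos : ∀ x ∈ Icc (0:ℝ) 1, 0 < k x)
    (hξs : ξs ∈ Ioo (0:ℝ) 1)
    (hmin : ∀ x ∈ Icc (0:ℝ) 1, x ≠ ξs → k ξs < k x)
    (hk's : deriv k ξs = 0)
    (hk''s : 0 < deriv (deriv k) ξs)
    (α β : ℝ)
    (hα1 : rhoC0 k ξs < α) (hα2 : α < 1) (hα3 : α ≠ 1 - rhoC0 k ξs)
    (hβ1 : 1 - rhoC1 k ξs < β) (hβ2 : β < 1) (hβ3 : β ≠ rhoC1 k ξs) :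
    ∀ δ > 0, ∃ ε₀ > 0, ∀ ε : ℝ, 0 < ε → ε < ε₀ →
      ∀ ρ : ℝ → ℝ, IsStatSol k ε α β ρ →
        |ρ 0 - (1 - k ξs / (4 * α * k 0))| < δ ∧
        |ρ 1 - k ξs / (4 * β * k 1)| < δ := by
  intro δ hδ
  have hξsIcc : ξs ∈ Icc (0:ℝ) 1 := ⟨hξs.1.le, hξs.2.le⟩
  have hm : 0 < k ξs := hkpos ξs hξsIcc
  have hkm : ∀ x ∈ Icc (0:ℝ) 1, k ξs ≤ k x := by
    intro x hx
    rcases eq_or_ne x ξs with h | h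
    · rw [h]
    · exact (hmin x hx h).le
  have hk0m : k ξs < k 0 := hmin 0 ⟨le_rfl, zero_le_one⟩ (fun h => by
    rw [← h] at hξs; exact lt_irrefl _ hξs.1)
  have hk1m : k ξs < k 1 := hmin 1 ⟨zero_le_one, le_rfl⟩ (fun h => by
    rw [← h] at hξs; exact lt_irrefl _ hξs.2)
  have hk0 : 0 < k 0 := hkpos 0 ⟨le_rfl, zero_le_one⟩
  have hk1 : 0 < k 1 := hkpos 1 ⟨zero_le_one, le_rfl⟩
  -- facts about rhoC0
  obtain ⟨s0, hs0⟩ : ∃ s, s = Real.sqrt (1 - k ξs/k 0) := ⟨_, rfl⟩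
  have harg0 : 0 < 1 - k ξs/k 0 := by rw [sub_pos, div_lt_one hk0]; exact hk0m
  have hs0sq : s0^2 = 1 - k ξs/k 0 := by rw [hs0]; exact Real.sq_sqrt harg0.le
  have hs0pos : 0 < s0 := by rw [hs0]; exact Real.sqrt_pos.mpr harg0
  have hs0lt1 : s0 < 1 := by
    have h1 : 0 < k ξs/k 0 := by positivity
    nlinarith
  have hr0def : rhoC0 k ξs = (1 - s0)/2 := by rw [rhoC0, hs0]; ring
  have hr0q : rhoC0 k ξs * (1 - rhoC0 k ξs) = k ξs/(4 * k 0) := by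
    rw [hr0def]
    have hne : (k 0 : ℝ) ≠ 0 := hk0.ne'
    linear_combination (-1/4 : ℝ) * hs0sq
  have hr0a : 0 < rhoC0 k ξs := by rw [hr0def]; linarith
  have hr0b : rhoC0 k ξs < 1/2 := by rw [hr0def]; linarith
  -- facts about rhoC1
  obtain ⟨s1, hs1⟩ : ∃ s, s = Real.sqrt (1 - k ξs/k 1) := ⟨_, rfl⟩
  have harg1 : 0 < 1 - k ξs/k 1 := by rw [sub_pos, div_lt_one hk1]; exact hk1m
  have hs1sq : s1^2 = 1 - k ξs/k 1 := by rw [hs1]; exact Real.sq_sqrt harg1.le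
  have hs1pos : 0 < s1 := by rw [hs1]; exact Real.sqrt_pos.mpr harg1
  have hs1lt1 : s1 < 1 := by
    have h1 : 0 < k ξs/k 1 := by positivity
    nlinarith
  have hr1def : rhoC1 k ξs = (1 + s1)/2 := by rw [rhoC1, hs1]; ring
  have hr1q : rhoC1 k ξs * (1 - rhoC1 k ξs) = k ξs/(4 * k 1) := by
    rw [hr1def]
    have hne : (k 1 : ℝ) ≠ 0 := hk1.ne'
    linear_combination (-1/4 : ℝ) * hs1sq
  have hr1a : 1/2 < rhoC1 k ξs := by rw [hr1def]; linarith
  have hr1b : rhoC1 k ξs < 1 := by rw [hr1def]; linarith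
  have hαpos : 0 < α := lt_trans hr0a hα1
  have hβpos : 0 < β := by linarith
  -- choice of δ'
  obtain ⟨δ', hδ'def⟩ : ∃ d, d = min (min (δ*(α*k 0)) (δ*(β*k 1)))
      (min (k ξs/8) (2*(k ξs)*(rhoC1 k ξs - 1/2)^2)) / 2 := ⟨_, rfl⟩
  have hδ'pos : 0 < δ' := by
    rw [hδ'def]
    apply div_pos _ two_pos
    apply lt_min (lt_min (by positivity) (by positivity))
    apply lt_min (by positivity)
    have : 0 < rhoC1 k ξs - 1/2 := by linarith
    positivity
  have hδm : δ' ≤ k ξs/8 := by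
    rw [hδ'def]
    have h1 := min_le_left (k ξs/8) (2*(k ξs)*(rhoC1 k ξs - 1/2)^2)
    have h2 := min_le_right (min (δ*(α*k 0)) (δ*(β*k 1)))
      (min (k ξs/8) (2*(k ξs)*(rhoC1 k ξs - 1/2)^2))
    have h3 : 0 < k ξs / 8 := by positivity
    linarith
  have hδr1 : δ' ≤ 2*(k ξs)*(rhoC1 k ξs - 1/2)^2 := by
    rw [hδ'def]
    have h1 := min_le_right (k ξs/8) (2*(k ξs)*(rhoC1 k ξs - 1/2)^2)
    have h2 := min_le_right (min (δ*(α*k 0)) (δ*(β*k 1)))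
      (min (k ξs/8) (2*(k ξs)*(rhoC1 k ξs - 1/2)^2))
    have h3 : 0 < rhoC1 k ξs - 1/2 := by linarith
    have h4 : 0 < 2*(k ξs)*(rhoC1 k ξs - 1/2)^2 := by positivity
    linarith
  have hδα : δ' ≤ δ*(α*k 0)/2 := by
    rw [hδ'def]
    have h1 := min_le_left (δ*(α*k 0)) (δ*(β*k 1))
    have h2 := min_le_left (min (δ*(α*k 0)) (δ*(β*k 1)))
      (min (k ξs/8) (2*(k ξs)*(rhoC1 k ξs - 1/2)^2))
    linarith
  have hδβ : δ' ≤ δ*(β*k 1)/2 := by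
    rw [hδ'def]
    have h1 := min_le_right (δ*(α*k 0)) (δ*(β*k 1))
    have h2 := min_le_left (min (δ*(α*k 0)) (δ*(β*k 1)))
      (min (k ξs/8) (2*(k ξs)*(rhoC1 k ξs - 1/2)^2))
    linarith
  -- window around ξs for the upper bound
  have hcont : ContinuousAt k ξs := hk.continuous.continuousAt
  rw [Metric.continuousAt_iff] at hcont
  obtain ⟨d, hd0, hdk⟩ := hcont δ' hδ'pos
  obtain ⟨w, hwdef⟩ : ∃ w, w = min (d/2) (min ξs (1 - ξs) / 2) := ⟨_, rfl⟩
  have hwpos : 0 < w := by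
    rw [hwdef]
    apply lt_min (by positivity)
    apply div_pos (lt_min hξs.1 (by linarith [hξs.2])) two_pos
  have hw0 : 0 ≤ ξs - w := by
    rw [hwdef]
    have h1 : min (d/2) (min ξs (1 - ξs) / 2) ≤ min ξs (1 - ξs) / 2 := min_le_right _ _
    have h2 : min ξs (1 - ξs) ≤ ξs := min_le_left _ _
    linarith
  have hw1 : ξs + w ≤ 1 := by
    rw [hwdef]
    have h1 : min (d/2) (min ξs (1 - ξs) / 2) ≤ min ξs (1 - ξs) / 2 := min_le_right _ _
    have h2 : min ξs (1 - ξs) ≤ 1 - ξs := min_le_right _ _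
    linarith
  have hkw : ∀ x, ξs - w ≤ x → x ≤ ξs + w → k x ≤ k ξs + δ' := by
    intro x hx1 hx2
    have hdist : dist x ξs < d := by
      rw [Real.dist_eq, abs_lt]
      have h1 : w ≤ d/2 := by rw [hwdef]; exact min_le_left _ _
      constructor <;> linarith
    have := hdk hdist
    rw [Real.dist_eq, abs_lt] at this
    linarith [this.2]
  -- lower bound package
  obtain ⟨ε₁, hε₁, hlow⟩ := K_not_low hk hkm hm hr0q hr0a hr0b hr1q hr1a hr1b
    hα1 hα2 hα3 hβ1 hβ2 hβ3 hδ'pos hδm hδr1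
  obtain ⟨εh, hεhdef⟩ : ∃ e, e = 2*w*(3*δ'/(4*(k ξs + δ'))) := ⟨_, rfl⟩
  have hεhpos : 0 < εh := by
    rw [hεhdef]
    apply mul_pos (by linarith)
    apply div_pos (by linarith) (by linarith)
  refine ⟨min ε₁ εh, lt_min hε₁ hεhpos, ?_⟩
  intro ε hε hεlt ρ hsol
  obtain ⟨hcρ, hdρ, hflux, hode⟩ := sol_setup hk hkpos hε hsol
  obtain ⟨K, hKdef⟩ : ∃ K, K = k 0 * flux ε ρ 0 := ⟨_, rfl⟩
  rw [← hKdef] at hflux hode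
  have hb0 := hsol.2.2.1
  have hb1 := hsol.2.2.2
  have hfl0 : flux ε ρ 0 = K / k 0 := hflux 0 ⟨le_rfl, zero_le_one⟩
  have hfl1 : flux ε ρ 1 = K / k 1 := hflux 1 ⟨zero_le_one, le_rfl⟩
  have hρ0eq : ρ 0 = 1 - K / (α * k 0) := by
    have h : α * (1 - ρ 0) = K / k 0 := by rw [← hfl0, hb0]
    rw [eq_div_iff hk0.ne'] at h
    have h2 : K / (α * k 0) = 1 - ρ 0 := by
      rw [div_eq_iff (by positivity)]
      linear_combination -h
    rw [h2]; ring
  have hρ1eq : ρ 1 = K / (β * k 1) := by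
    have h : β * ρ 1 = K / k 1 := by rw [← hfl1, hb1]
    rw [eq_div_iff hk1.ne'] at h
    rw [eq_div_iff (by positivity)]
    linear_combination h
  have hKb : |K - k ξs/4| < δ' := by
    by_contra habs
    push_neg at habs
    rcases le_abs.mp habs with h | h
    · exact K_not_high hcρ hdρ hode hkm hm hρ0eq hρ1eq hαpos hβpos hδ'pos
        hwpos hw0 hw1 hkw hε (by rw [← hεhdef]; exact lt_of_lt_of_le hεlt (min_le_right _ _))
        (by linarith)
    · exact hlow ε ρ K hε (lt_of_lt_of_le hεlt (min_le_left _ _)) hcρ hdρ hode hρ0eq hρ1eq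
        (by linarith)
  constructor
  · rw [hρ0eq]
    have hid : 1 - K/(α*k 0) - (1 - k ξs/(4*α*k 0)) = (k ξs/4 - K)/(α*k 0) := by
      field_simp
      ring
    rw [hid, abs_div, abs_of_pos (by positivity : (0:ℝ) < α * k 0), div_lt_iff₀ (by positivity)]
    rw [abs_sub_comm] at hKb
    have h9 : 0 < δ * (α * k 0) := by positivity
    linarith
  · rw [hρ1eq]
    have hid : K/(β*k 1) - k ξs/(4*β*k 1) = (K - k ξs/4)/(β*k 1) := by
      field_simp
    rw [hid, abs_div, abs_of_pos (by positivity : (0:ℝ) < β * k 1), div_lt_iff₀ (by positivity)]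
    have h9 : 0 < δ * (β * k 1) := by positivity
    linarith
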